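/- Let (X,d) be a compact metric space, T a homeomorphism, and μ a T-invariant regular Borel probability measure. Suppose that for every finite measurable partition α = {A₁,…,A_l} of X and every ε>0 there exist finitely many measurable sets B₁,…,B_k with μ(⋃B_i) > 1−ε such that H_n^α(x,y) < ε for all n ≥ 1 whenever x,y lie in a common B_i, where H_n^α(x,y) = (1/n)#{0≤i≤n−1 : Tⁱx and Tⁱy lie in different cells of α}. Then (X,T) is μ-equicontinuous in the mean: for every τ>0 there is a compact K with μ(K)>1−τ and for every ε>0 a δ>0 such that (1/n)∑_{i=0}^{n−1} d(Tⁱx,Tⁱy) < ε for all n whenever x,y∈K with d(x,y)<δ. -/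

import Mathlib

open MeasureTheory Filter Metric Set
open scoped ENNReal NNReal

/-- Hamming average `H_n^α(x,y)`: fraction of times `0 ≤ i < n` at which `Tⁱx` and `Tⁱy`
lie in different cells of the partition `A`. -/
noncomputable def ham {X : Type*} (T : X → X) {l : ℕ} (A : Fin l → Set X)
    (n : ℕ) (x y : X) : ℝ :=
  (∑ i ∈ Finset.range n,
    ((⋃ j, A j ×ˢ A j)ᶜ : Set (X × X)).indicator (fun _ => (1 : ℝ)) (T^[i] x, T^[i] y)) / n

lemma iUnion_disjointed_fin {X : Type*} (f : ℕ → Set X) (l : ℕ) (hf : ∀ n, l ≤ n → f n = ∅) :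
    (⋃ j : Fin l, disjointed f (j : ℕ)) = ⋃ n, f n := by
  rw [← iUnion_disjointed (f := f)]
  apply subset_antisymm
  · exact iUnion_subset fun j => subset_iUnion (fun n => disjointed f n) (j : ℕ)
  · intro x hx
    obtain ⟨n, hn⟩ := mem_iUnion.1 hx
    have hnl : n < l := by
      by_contra h
      have := disjointed_subset f n hn
      rw [hf n (le_of_not_gt h)] at this
      exact this
    exact mem_iUnion.2 ⟨⟨n, hnl⟩, hn⟩

lemma exists_partition {X : Type*} [MetricSpace X] [CompactSpace X]
    [MeasurableSpace X] [BorelSpace X] {r : ℝ} (hr : 0 < r) :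
    ∃ (l : ℕ) (A : Fin l → Set X), (∀ j, MeasurableSet (A j)) ∧
      Pairwise (Function.onFun Disjoint A) ∧ (⋃ j, A j) = Set.univ ∧
      ∀ j, ∀ x ∈ A j, ∀ y ∈ A j, dist x y ≤ 2 * r := by
  classical
  obtain ⟨t, -, htf, htc⟩ := finite_cover_balls_of_compact (isCompact_univ : IsCompact (Set.univ : Set X)) hr
  set s := htf.toFinset with hs
  set l := s.card with hl
  set g : Fin l → X := fun j => (s.equivFin.symm j : X) with hg
  set f : ℕ → Set X := fun i => if h : i < l then ball (g ⟨i, h⟩) r else (∅ : Set X) with hfdef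
  have hfe : ∀ n, l ≤ n → f n = ∅ := by
    intro n hn; simp only [hfdef]; rw [dif_neg (not_lt.2 hn)]
  have hfunion : (⋃ n, f n) = Set.univ := by
    apply subset_antisymm (subset_univ _)
    intro x _
    obtain ⟨c, hc, hxc⟩ := mem_iUnion₂.1 (htc (mem_univ x))
    have hcs : c ∈ s := htf.mem_toFinset.2 hc
    set j : Fin l := s.equivFin ⟨c, hcs⟩ with hj
    refine mem_iUnion.2 ⟨(j : ℕ), ?_⟩
    have : f (j : ℕ) = ball (g j) r := by
      simp only [hfdef]; rw [dif_pos j.isLt]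
    rw [this]
    have : g j = c := by simp [hg, hj]
    rw [this]; exact hxc
  refine ⟨l, fun j => disjointed f (j : ℕ), ?_, ?_, ?_, ?_⟩
  · intro j
    apply MeasurableSet.disjointed
    intro n
    simp only [hfdef]
    split
    · exact measurableSet_ball
    · exact MeasurableSet.empty
  · intro j j' hjj'
    exact disjoint_disjointed f (fun hc => hjj' (Fin.ext hc))
  · rw [iUnion_disjointed_fin f l hfe, hfunion]
  · intro j x hx y hy
    have hsub : disjointed f (j : ℕ) ⊆ ball (g j) r := by
      refine (disjointed_subset f (j : ℕ)).trans ?_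
      simp only [hfdef]
      rw [dif_pos j.isLt]
    have hx' := hsub hx
    have hy' := hsub hy
    rw [mem_ball] at hx' hy'
    calc dist x y ≤ dist x (g j) + dist (g j) y := dist_triangle _ _ _
      _ ≤ r + r := add_le_add hx'.le (le_of_lt (by rwa [dist_comm] at hy'))
      _ = 2 * r := by ring

lemma exists_sep {X : Type*} [MetricSpace X] {k : ℕ} {C : Fin k → Set X}
    (hC : ∀ i, IsCompact (C i)) (hd : Pairwise (Function.onFun Disjoint C)) :
    ∃ δ > 0, ∀ x ∈ ⋃ i, C i, ∀ y ∈ ⋃ i, C i, dist x y < δ →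
      ∃ i, x ∈ C i ∧ y ∈ C i := by
  classical
  rcases Nat.eq_zero_or_pos k with hk | hk
  · subst hk
    exact ⟨1, one_pos, fun x hx => by simp at hx⟩
  have hne : Nonempty (Fin k × Fin k) := ⟨(⟨0, hk⟩, ⟨0, hk⟩)⟩
  have key : ∀ p : Fin k × Fin k, ∃ δ : ℝ, 0 < δ ∧
      ∀ x ∈ C p.1, ∀ y ∈ C p.2, dist x y < δ → p.1 = p.2 := by
    rintro ⟨i, j⟩
    by_cases hij : i = j
    · exact ⟨1, one_pos, fun _ _ _ _ _ => hij⟩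
    by_cases hpe : (C i ×ˢ C j).Nonempty
    · obtain ⟨p0, hp0, hmin⟩ := ((hC i).prod (hC j)).exists_isMinOn hpe
        (continuous_dist.continuousOn :
          ContinuousOn (fun p : X × X => dist p.1 p.2) (C i ×ˢ C j))
      refine ⟨dist p0.1 p0.2, ?_, ?_⟩
      · rw [dist_pos]
        intro hcontra
        have h1 : p0.1 ∈ C i := hp0.1
        have h2 : p0.1 ∈ C j := hcontra ▸ hp0.2
        exact Set.disjoint_left.1 (hd hij) h1 h2
      · intro x hx y hy hxy
        exact absurd (hmin (Set.mk_mem_prod hx hy)) (not_le.2 hxy)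
    · exact ⟨1, one_pos, fun x hx y hy _ => absurd ⟨(x, y), Set.mk_mem_prod hx hy⟩ hpe⟩
  choose δf hδf using key
  refine ⟨Finset.univ.inf' Finset.univ_nonempty δf, ?_, ?_⟩
  · rw [gt_iff_lt, Finset.lt_inf'_iff]
    exact fun p _ => (hδf p).1
  · intro x hx y hy hxy
    obtain ⟨i, hxi⟩ := mem_iUnion.1 hx
    obtain ⟨j, hyj⟩ := mem_iUnion.1 hy
    have hle : Finset.univ.inf' Finset.univ_nonempty δf ≤ δf (i, j) :=
      Finset.inf'_le _ (Finset.mem_univ _)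
    have hij : i = j := (hδf (i, j)).2 x hxi y hyj (lt_of_lt_of_le hxy hle)
    exact ⟨i, hxi, hij ▸ hyj⟩

lemma prob_compl_lt {X : Type*} [MeasurableSpace X] (μ : Measure X) [IsProbabilityMeasure μ]
    {S : Set X} (hS : MeasurableSet S) {e : ℝ} (he : 0 < e)
    (h : ENNReal.ofReal (1 - e) < μ S) : μ Sᶜ < ENNReal.ofReal e := by
  rcases lt_or_ge e 1 with h1 | h1
  · have hb : ENNReal.ofReal e ≤ 1 := by
      rw [← ENNReal.ofReal_one]; exact ENNReal.ofReal_le_ofReal h1.le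
    rw [prob_compl_eq_one_sub hS,
      ENNReal.sub_lt_iff_lt_right (measure_ne_top μ S) prob_le_one]
    rw [ENNReal.ofReal_sub 1 he.le, ENNReal.ofReal_one] at h
    rw [ENNReal.sub_lt_iff_lt_right ENNReal.ofReal_ne_top hb] at h
    rwa [add_comm]
  · have h0 : μ S ≠ 0 := by
      intro h0
      rw [h0] at h
      exact absurd h (by simp)
    calc μ Sᶜ = 1 - μ S := prob_compl_eq_one_sub hS
      _ < 1 := ENNReal.sub_lt_self ENNReal.one_ne_top one_ne_zero h0
      _ ≤ ENNReal.ofReal e := by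
          rw [← ENNReal.ofReal_one]; exact ENNReal.ofReal_le_ofReal h1
lemma stage {X : Type*} [MetricSpace X] [CompactSpace X]
    [MeasurableSpace X] [BorelSpace X]
    (T : X → X) (μ : Measure X) [IsProbabilityMeasure μ] [μ.Regular]
    (hyp : ∀ (l : ℕ) (A : Fin l → Set X), (∀ j, MeasurableSet (A j)) →
      Pairwise (Function.onFun Disjoint A) → (⋃ j, A j) = Set.univ →
      ∀ ε : ℝ, 0 < ε → ∃ (k : ℕ) (B : Fin k → Set X),
        (∀ i, MeasurableSet (B i)) ∧ μ (⋃ i, B i) > ENNReal.ofReal (1 - ε) ∧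
        ∀ i : Fin k, ∀ x ∈ B i, ∀ y ∈ B i, ∀ n : ℕ, 1 ≤ n → ham T A n x y < ε)
    {e r : ℝ} (he : 0 < e) (hr : 0 < r) :
    ∃ K : Set X, IsCompact K ∧ μ Kᶜ < ENNReal.ofReal (2 * e) ∧
      ∃ δ > 0, ∀ x ∈ K, ∀ y ∈ K, dist x y < δ → ∀ n : ℕ, 1 ≤ n →
        (∑ i ∈ Finset.range n, dist (T^[i] x) (T^[i] y)) / n ≤
          Metric.diam (Set.univ : Set X) * e + 2 * r := by
  classical
  obtain ⟨l, A, hAm, hAd, hAu, hAdiam⟩ := exists_partition (X := X) hr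
  obtain ⟨k, B, hBm, hBμ, hBham⟩ := hyp l A hAm hAd hAu e he
  set f : ℕ → Set X := fun i => if h : i < k then B ⟨i, h⟩ else (∅ : Set X) with hfdef
  have hfe : ∀ n, k ≤ n → f n = ∅ := by
    intro n hn; simp only [hfdef]; rw [dif_neg (not_lt.2 hn)]
  set B' : Fin k → Set X := fun i => disjointed f (i : ℕ) with hB'def
  have hB'sub : ∀ i, B' i ⊆ B i := by
    intro i
    refine (disjointed_subset f (i : ℕ)).trans ?_
    simp only [hfdef]
    rw [dif_pos i.isLt]
  have hB'm : ∀ i, MeasurableSet (B' i) := by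
    intro i
    apply MeasurableSet.disjointed
    intro n
    simp only [hfdef]
    split
    · exact hBm _
    · exact MeasurableSet.empty
  have hB'd : Pairwise (Function.onFun Disjoint B') := by
    intro i j hij
    exact disjoint_disjointed f (fun hc => hij (Fin.ext hc))
  have hB'u : (⋃ i, B' i) = ⋃ i, B i := by
    rw [hB'def]
    rw [iUnion_disjointed_fin f k hfe]
    apply subset_antisymm
    · intro x hx
      obtain ⟨n, hn⟩ := mem_iUnion.1 hx
      have hnk : n < k := by
        by_contra h
        rw [hfe n (le_of_not_gt h)] at hn
        exact hn
      refine mem_iUnion.2 ⟨⟨n, hnk⟩, ?_⟩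
      have : f n = B ⟨n, hnk⟩ := by simp only [hfdef]; rw [dif_pos hnk]
      rwa [this] at hn
    · intro x hx
      obtain ⟨i, hi⟩ := mem_iUnion.1 hx
      refine mem_iUnion.2 ⟨(i : ℕ), ?_⟩
      have : f (i : ℕ) = B i := by simp only [hfdef]; rw [dif_pos i.isLt]
      rwa [this]
  -- compact approximations
  have hofr : (ENNReal.ofReal (e / (k + 1))) ≠ 0 := by
    simp only [ne_eq, ENNReal.ofReal_eq_zero, not_le]
    positivity
  have hCex : ∀ i : Fin k, ∃ C, C ⊆ B' i ∧ IsCompact C ∧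
      μ (B' i) < μ C + ENNReal.ofReal (e / (k + 1)) :=
    fun i => (hB'm i).exists_isCompact_lt_add (measure_ne_top μ _) hofr
  choose C hCsub hCcomp hCμ using hCex
  set K : Set X := ⋃ i, C i with hKdef
  have hKcomp : IsCompact K := isCompact_iUnion hCcomp
  refine ⟨K, hKcomp, ?_, ?_⟩
  · -- measure bound
    have h1 : μ ((⋃ i, B i)ᶜ) < ENNReal.ofReal e :=
      prob_compl_lt μ (MeasurableSet.iUnion fun i => hBm i) he hBμ
    have h2 : μ ((⋃ i, B' i) \ K) ≤ ENNReal.ofReal e := by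
      have hsub : (⋃ i, B' i) \ K ⊆ ⋃ i, (B' i \ C i) := by
        intro x hx
        obtain ⟨i, hi⟩ := mem_iUnion.1 hx.1
        exact mem_iUnion.2 ⟨i, hi, fun hc => hx.2 (mem_iUnion.2 ⟨i, hc⟩)⟩
      refine (measure_mono hsub).trans ?_
      refine (measure_iUnion_fintype_le μ _).trans ?_
      have hterm : ∀ i : Fin k, μ (B' i \ C i) ≤ ENNReal.ofReal (e / (k + 1)) := by
        intro i
        rw [measure_diff (hCsub i) (hCcomp i).isClosed.measurableSet.nullMeasurableSet
          (measure_ne_top μ _)]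
        exact tsub_le_iff_right.2 (by rw [add_comm]; exact (hCμ i).le)
      refine (Finset.sum_le_sum fun i _ => hterm i).trans ?_
      rw [Finset.sum_const, Finset.card_univ, Fintype.card_fin, nsmul_eq_mul]
      calc (k : ℝ≥0∞) * ENNReal.ofReal (e / (k + 1))
          = ENNReal.ofReal ((k : ℝ) * (e / (k + 1))) := by
            rw [ENNReal.ofReal_mul (by positivity), ENNReal.ofReal_natCast]
        _ ≤ ENNReal.ofReal e := by
            apply ENNReal.ofReal_le_ofReal
            rw [mul_div_assoc']
            rw [div_le_iff₀ (by positivity)]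
            nlinarith [he.le]
    have hcover : Kᶜ ⊆ (⋃ i, B i)ᶜ ∪ ((⋃ i, B' i) \ K) := by
      intro x hx
      by_cases hxB : x ∈ ⋃ i, B i
      · exact Or.inr ⟨hB'u.symm ▸ hxB, hx⟩
      · exact Or.inl hxB
    calc μ Kᶜ ≤ μ ((⋃ i, B i)ᶜ ∪ ((⋃ i, B' i) \ K)) := measure_mono hcover
      _ ≤ μ ((⋃ i, B i)ᶜ) + μ ((⋃ i, B' i) \ K) := measure_union_le _ _
      _ ≤ μ ((⋃ i, B i)ᶜ) + ENNReal.ofReal e := add_le_add_right h2 _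
      _ < ENNReal.ofReal e + ENNReal.ofReal e :=
          ENNReal.add_lt_add_right ENNReal.ofReal_ne_top h1
      _ = ENNReal.ofReal (2 * e) := by
          rw [← ENNReal.ofReal_add he.le he.le]; ring_nf
  · -- separation and final estimate
    have hCd : Pairwise (Function.onFun Disjoint C) := by
      intro i j hij
      exact (hB'd hij).mono (hCsub i) (hCsub j)
    obtain ⟨δ, hδ0, hδ⟩ := exists_sep hCcomp hCd
    refine ⟨δ, hδ0, ?_⟩
    intro x hx y hy hxy n hn
    obtain ⟨i, hxi, hyi⟩ := hδ x hx y hy hxy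
    have hxB : x ∈ B i := hB'sub i (hCsub i hxi)
    have hyB : y ∈ B i := hB'sub i (hCsub i hyi)
    have hham : ham T A n x y < e := hBham i x hxB y hyB n hn
    set D := Metric.diam (Set.univ : Set X) with hD
    have hD0 : 0 ≤ D := diam_nonneg
    set ind : ℕ → ℝ := fun m =>
      ((⋃ j, A j ×ˢ A j)ᶜ : Set (X × X)).indicator (fun _ => (1 : ℝ))
        (T^[m] x, T^[m] y) with hind
    have hpt : ∀ m, dist (T^[m] x) (T^[m] y) ≤ D * ind m + 2 * r := by
      intro m
      by_cases hmem : (T^[m] x, T^[m] y) ∈ ⋃ j, A j ×ˢ A j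
      · obtain ⟨j, hj⟩ := mem_iUnion.1 hmem
        have hd : dist (T^[m] x) (T^[m] y) ≤ 2 * r := hAdiam j _ hj.1 _ hj.2
        have : ind m = 0 := by
          simp only [hind]
          exact Set.indicator_of_notMem (by simpa using hmem) _
        rw [this]
        linarith
      · have : ind m = 1 := by
          simp only [hind]
          exact Set.indicator_of_mem (by simpa using hmem) _
        rw [this]
        have hd : dist (T^[m] x) (T^[m] y) ≤ D :=
          dist_le_diam_of_mem isCompact_univ.isBounded (mem_univ _) (mem_univ _)
        linarith
    have hn0 : (0 : ℝ) < n := by exact_mod_cast hn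
    have hsum : (∑ i ∈ Finset.range n, dist (T^[i] x) (T^[i] y)) ≤
        D * (∑ i ∈ Finset.range n, ind i) + n * (2 * r) := by
      calc (∑ i ∈ Finset.range n, dist (T^[i] x) (T^[i] y))
          ≤ ∑ i ∈ Finset.range n, (D * ind i + 2 * r) :=
            Finset.sum_le_sum fun i _ => hpt i
        _ = D * (∑ i ∈ Finset.range n, ind i) + n * (2 * r) := by
            rw [Finset.sum_add_distrib, ← Finset.mul_sum, Finset.sum_const,
              Finset.card_range, nsmul_eq_mul]
    have hhameq : ham T A n x y = (∑ i ∈ Finset.range n, ind i) / n := rfl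
    calc (∑ i ∈ Finset.range n, dist (T^[i] x) (T^[i] y)) / n
        ≤ (D * (∑ i ∈ Finset.range n, ind i) + n * (2 * r)) / n :=
          div_le_div_of_nonneg_right hsum hn0.le |>.trans_eq rfl
      _ = D * ((∑ i ∈ Finset.range n, ind i) / n) + 2 * r := by
          field_simp
      _ ≤ D * e + 2 * r := by
          have : D * ((∑ i ∈ Finset.range n, ind i) / n) ≤ D * e := by
            apply mul_le_mul_of_nonneg_left _ hD0
            rw [← hhameq]
            exact hham.le
          linarith
theorem stmt7 {X : Type*} [MetricSpace X] [CompactSpace X]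
    [MeasurableSpace X] [BorelSpace X]
    (T : X ≃ₜ X) (μ : Measure X) [IsProbabilityMeasure μ] [μ.Regular]
    (hT : MeasurePreserving (⇑T) μ μ)
    (hyp : ∀ (l : ℕ) (A : Fin l → Set X), (∀ j, MeasurableSet (A j)) →
      Pairwise (Function.onFun Disjoint A) → (⋃ j, A j) = Set.univ →
      ∀ ε : ℝ, 0 < ε → ∃ (k : ℕ) (B : Fin k → Set X),
        (∀ i, MeasurableSet (B i)) ∧ μ (⋃ i, B i) > ENNReal.ofReal (1 - ε) ∧
        ∀ i : Fin k, ∀ x ∈ B i, ∀ y ∈ B i, ∀ n : ℕ, 1 ≤ n →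
          ham (⇑T) A n x y < ε) :
    ∀ τ : ℝ, 0 < τ → ∃ K : Set X, IsCompact K ∧
      μ K > ENNReal.ofReal (1 - τ) ∧
      ∀ ε : ℝ, 0 < ε → ∃ δ : ℝ, 0 < δ ∧ ∀ x ∈ K, ∀ y ∈ K, dist x y < δ →
        ∀ n : ℕ, 1 ≤ n →
          (∑ i ∈ Finset.range n, dist ((⇑T)^[i] x) ((⇑T)^[i] y)) / n < ε := by
  intro τ hτ
  classical
  set D := Metric.diam (Set.univ : Set X) with hDdef
  have hD0 : 0 ≤ D := diam_nonneg
  set τ' := min τ 1 with hτ'def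
  have hτ'0 : 0 < τ' := lt_min hτ one_pos
  have hτ'1 : τ' ≤ 1 := min_le_right _ _
  set em : ℕ → ℝ := fun m => min ((1 / 2) ^ m / (D + 1)) (τ' / 16 * (1 / 2) ^ m) with hemdef
  have hem0 : ∀ m, 0 < em m := fun m => lt_min (by positivity) (by positivity)
  have key : ∀ m : ℕ, ∃ K : Set X, IsCompact K ∧
      μ Kᶜ < ENNReal.ofReal (2 * em m) ∧
      ∃ δ > 0, ∀ x ∈ K, ∀ y ∈ K, dist x y < δ → ∀ n : ℕ, 1 ≤ n →
        (∑ i ∈ Finset.range n, dist ((⇑T)^[i] x) ((⇑T)^[i] y)) / n ≤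
          D * em m + 2 * ((1 / 2) ^ (m + 3)) :=
    fun m => stage (⇑T) μ hyp (hem0 m) (by positivity)
  choose Km hKmc hKmμ δm hδm0 hKm using key
  set K : Set X := ⋂ m, Km m with hKdef
  have hKmeas : MeasurableSet K :=
    MeasurableSet.iInter fun m => (hKmc m).isClosed.measurableSet
  have hKcomp : IsCompact K :=
    (isClosed_iInter fun m => (hKmc m).isClosed).isCompact
  refine ⟨K, hKcomp, ?_, ?_⟩
  · -- measure estimate
    have hterm : ∀ m : ℕ, μ (Km m)ᶜ ≤ ENNReal.ofReal (τ' / 8 * (1 / 2) ^ m) := by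
      intro m
      refine (hKmμ m).le.trans (ENNReal.ofReal_le_ofReal ?_)
      have : em m ≤ τ' / 16 * (1 / 2) ^ m := min_le_right _ _
      nlinarith [this]
    have hsummable : Summable (fun m : ℕ => τ' / 8 * (1 / 2) ^ m) :=
      (summable_geometric_of_lt_one (by norm_num) (by norm_num)).mul_left _
    have htsum : (∑' m : ℕ, τ' / 8 * (1 / 2) ^ m) = τ' / 4 := by
      rw [tsum_mul_left, tsum_geometric_two]
      ring
    have hKc : μ Kᶜ ≤ ENNReal.ofReal (τ' / 4) := by
      have h1 : Kᶜ = ⋃ m, (Km m)ᶜ := by rw [hKdef, compl_iInter]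
      rw [h1]
      refine (measure_iUnion_le _).trans ?_
      calc (∑' m, μ (Km m)ᶜ)
          ≤ ∑' m : ℕ, ENNReal.ofReal (τ' / 8 * (1 / 2) ^ m) :=
            ENNReal.tsum_le_tsum hterm
        _ = ENNReal.ofReal (∑' m : ℕ, τ' / 8 * (1 / 2) ^ m) :=
            (ENNReal.ofReal_tsum_of_nonneg (fun m => by positivity) hsummable).symm
        _ = ENNReal.ofReal (τ' / 4) := by rw [htsum]
    have hμK : 1 - ENNReal.ofReal (τ' / 4) ≤ μ K := by
      have h6 : (1 : ℝ≥0∞) ≤ μ K + μ Kᶜ := by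
        rw [measure_add_measure_compl hKmeas, measure_univ]
      exact le_trans (tsub_le_tsub_left hKc 1) (tsub_le_iff_right.2 h6)
    have heq : (1 : ℝ≥0∞) - ENNReal.ofReal (τ' / 4) = ENNReal.ofReal (1 - τ' / 4) := by
      rw [ENNReal.ofReal_sub 1 (by positivity), ENNReal.ofReal_one]
    have hstrict : ENNReal.ofReal (1 - τ) < ENNReal.ofReal (1 - τ' / 4) := by
      apply ENNReal.ofReal_lt_ofReal_iff (by linarith) |>.2
      have : τ' ≤ τ := min_le_left _ _
      linarith
    calc ENNReal.ofReal (1 - τ) < ENNReal.ofReal (1 - τ' / 4) := hstrict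
      _ = 1 - ENNReal.ofReal (τ' / 4) := heq.symm
      _ ≤ μ K := hμK
  · -- equicontinuity estimate
    intro ε hε
    obtain ⟨m, hm⟩ := exists_pow_lt_of_lt_one (by positivity : (0:ℝ) < ε / 4)
      (by norm_num : (1:ℝ) / 2 < 1)
    refine ⟨δm m, hδm0 m, ?_⟩
    intro x hx y hy hxy n hn
    have hx' : x ∈ Km m := mem_iInter.1 hx m
    have hy' : y ∈ Km m := mem_iInter.1 hy m
    have hb := hKm m x hx' y hy' hxy n hn
    have hp : (0:ℝ) < (1 / 2) ^ m := by positivity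
    have h1 : D * em m ≤ (1 / 2) ^ m := by
      have h2 : em m ≤ (1 / 2) ^ m / (D + 1) := min_le_left _ _
      have h3 : D * em m ≤ D * ((1 / 2) ^ m / (D + 1)) :=
        mul_le_mul_of_nonneg_left h2 hD0
      have h4 : D * ((1 / 2) ^ m / (D + 1)) ≤ (1 / 2) ^ m := by
        rw [mul_div_assoc']
        rw [div_le_iff₀ (by positivity)]
        nlinarith
      linarith
    have h5 : (2:ℝ) * ((1 / 2) ^ (m + 3)) ≤ (1 / 2) ^ m := by
      rw [pow_add]
      nlinarith
    calc (∑ i ∈ Finset.range n, dist ((⇑T)^[i] x) ((⇑T)^[i] y)) / n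
        ≤ D * em m + 2 * ((1 / 2) ^ (m + 3)) := hb
      _ ≤ (1 / 2) ^ m + (1 / 2) ^ m := add_le_add h1 h5
      _ < ε := by linarith
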